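/- If a linear order L admits an order embedding into the ω₁-lengthened rational line U, then L condenses to 1 under the countable condensation: for all x y : L, the interval Set.uIcc x y is countable. -/

import Mathlib

/-- The canonical linear order of order type `ω₁`. -/
noncomputable abbrev Omega1 : Type := (Cardinal.aleph 1).ord.ToType

/-- `ω₁` consecutive blocks, each consisting of one point followed by a copy of `ℚ`. -/
noncomputable abbrev Dline : Type := Lex (Omega1 × (PUnit ⊕ₗ ℚ))

/-- The `ω₁`-lengthened rational line `U`. -/
noncomputable abbrev Uline : Type := (OrderDual Dline) ⊕ₗ (ℚ ⊕ₗ Dline)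

lemma omega1_Iic_countable (b : Omega1) : (Set.Iic b).Countable := by
  have h1 : (Set.Iio b).Countable := by
    rw [Cardinal.countable_iff_lt_aleph_one]
    exact Cardinal.mk_Iio_ord_toType b
  have : Set.Iic b ⊆ Set.Iio b ∪ {b} := by
    intro x hx
    rcases lt_or_eq_of_le (Set.mem_Iic.mp hx) with h | h
    · exact Or.inl h
    · exact Or.inr h
  exact ((h1.union (Set.countable_singleton b)).mono this)

lemma dline_Iic_countable (d : Dline) : (Set.Iic d).Countable := by
  have hsub : Set.Iic d ⊆ toLex '' ((Set.Iic (ofLex d).1) ×ˢ (Set.univ : Set (PUnit ⊕ₗ ℚ))) := by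
    intro x hx
    refine ⟨ofLex x, ⟨?_, Set.mem_univ _⟩, rfl⟩
    have := Prod.Lex.le_iff.mp hx
    rcases this with h | ⟨h, _⟩
    · exact le_of_lt h
    · exact le_of_eq h
  haveI : Countable (PUnit ⊕ₗ ℚ) := Countable.of_equiv _ toLex
  exact (((omega1_Iic_countable _).prod Set.countable_univ).image toLex).mono hsub

lemma dline_dual_Icc_countable (a b : OrderDual Dline) : (Set.Icc a b).Countable := by
  have : Set.Icc a b ⊆ Set.Ici a := Set.Icc_subset_Ici_self
  have h2 : (Set.Ici a : Set (OrderDual Dline)) = (Set.Iic (OrderDual.ofDual a) : Set Dline) := rfl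
  exact ((h2 ▸ dline_Iic_countable (OrderDual.ofDual a)).mono this)

lemma mid_Iic_countable (b : ℚ ⊕ₗ Dline) : (Set.Iic b).Countable := by
  rcases b with q | d
  · -- b = inl q : everything below is in the ℚ part
    have hsub : Set.Iic (toLex (Sum.inl q) : ℚ ⊕ₗ Dline) ⊆
        (fun r : ℚ => toLex (Sum.inl r)) '' Set.univ := by
      intro x hx
      rcases x with r | d'
      · exact ⟨r, Set.mem_univ _, rfl⟩
      · exact absurd hx Sum.Lex.not_inr_le_inl
    exact ((Set.countable_univ.image _).mono hsub)
  · have hsub : Set.Iic (toLex (Sum.inr d) : ℚ ⊕ₗ Dline) ⊆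
        (fun r : ℚ => toLex (Sum.inl r)) '' Set.univ ∪
        (fun x : Dline => toLex (Sum.inr x)) '' Set.Iic d := by
      intro x hx
      rcases x with r | d'
      · exact Or.inl ⟨r, Set.mem_univ _, rfl⟩
      · exact Or.inr ⟨d', Sum.Lex.inr_le_inr_iff.mp hx, rfl⟩
    exact (((Set.countable_univ.image _).union
      ((dline_Iic_countable d).image _)).mono hsub)

lemma uline_Icc_countable (a b : Uline) : (Set.Icc a b).Countable := by
  rcases a with a | a
  · rcases b with b | b
    · -- both in the dual part
      have hsub : Set.Icc (toLex (Sum.inl a) : Uline) (toLex (Sum.inl b)) ⊆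
          (fun x : OrderDual Dline => (toLex (Sum.inl x) : Uline)) '' Set.Icc a b := by
        intro x hx
        rcases x with x | x
        · exact ⟨x, ⟨Sum.Lex.inl_le_inl_iff.mp hx.1, Sum.Lex.inl_le_inl_iff.mp hx.2⟩, rfl⟩
        · exact absurd hx.2 Sum.Lex.not_inr_le_inl
      exact (((dline_dual_Icc_countable a b).image _).mono hsub)
    · -- a in the dual part, b in the right part
      have hsub : Set.Icc (toLex (Sum.inl a) : Uline) (toLex (Sum.inr b)) ⊆
          (fun x : OrderDual Dline => (toLex (Sum.inl x) : Uline)) '' Set.Ici a ∪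
          (fun x : ℚ ⊕ₗ Dline => (toLex (Sum.inr x) : Uline)) '' Set.Iic b := by
        intro x hx
        rcases x with x | x
        · exact Or.inl ⟨x, Sum.Lex.inl_le_inl_iff.mp hx.1, rfl⟩
        · exact Or.inr ⟨x, Sum.Lex.inr_le_inr_iff.mp hx.2, rfl⟩
      have h1 : (Set.Ici a : Set (OrderDual Dline)).Countable := by
        have : (Set.Ici a : Set (OrderDual Dline)) =
            (Set.Iic (OrderDual.ofDual a) : Set Dline) := rfl
        exact this ▸ dline_Iic_countable (OrderDual.ofDual a)
      exact (((h1.image _).union ((mid_Iic_countable b).image _)).mono hsub)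
  · rcases b with b | b
    · -- Icc is empty
      have : Set.Icc (toLex (Sum.inr a) : Uline) (toLex (Sum.inl b)) ⊆ (∅ : Set Uline) := by
        rintro x ⟨h1, h2⟩
        exact Sum.Lex.not_inr_le_inl (h1.trans h2)
      exact Set.countable_empty.mono this
    · have hsub : Set.Icc (toLex (Sum.inr a) : Uline) (toLex (Sum.inr b)) ⊆
          (fun x : ℚ ⊕ₗ Dline => (toLex (Sum.inr x) : Uline)) '' Set.Iic b := by
        intro x hx
        rcases x with x | x
        · exact absurd hx.1 Sum.Lex.not_inr_le_inl
        · exact ⟨x, Sum.Lex.inr_le_inr_iff.mp hx.2, rfl⟩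
      exact (((mid_Iic_countable b).image _).mono hsub)

/-- If a linear order `L` order-embeds into the `ω₁`-lengthened rational
line `U`, then `L` condenses to `1` under the countable condensation. -/
theorem condenses_to_one_of_embeds_into_Uline
    {L : Type*} [LinearOrder L] (f : L ↪o Uline) :
    ∀ x y : L, (Set.uIcc x y).Countable := by
  intro x y
  rcases le_total x y with h | h
  · rw [Set.uIcc_of_le h]
    have hmaps : Set.Icc x y ⊆ f ⁻¹' Set.Icc (f x) (f y) := fun z hz =>
      ⟨f.monotone hz.1, f.monotone hz.2⟩
    exact ((uline_Icc_countable (f x) (f y)).preimage f.injective).mono hmaps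
  · rw [Set.uIcc_of_ge h]
    have hmaps : Set.Icc y x ⊆ f ⁻¹' Set.Icc (f y) (f x) := fun z hz =>
      ⟨f.monotone hz.1, f.monotone hz.2⟩
    exact ((uline_Icc_countable (f y) (f x)).preimage f.injective).mono hmaps
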